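/- Theorem 2.1, energy part: Suppose (u_h, q_h, p_h) satisfy the semidiscrete DG scheme with zero source, with numerical traces û_h = {u_h}, q̂_h = {q_h} + τ_qu ⟦u_h⟧, p̂_h = {p_h} + τ_pu ⟦u_h⟧ at every node, where the (node-independent) parameters τ_qu, τ_pu : [0,T] → ℝ satisfy at every t: τ_pu Σ_{i=1}^N ⟦u_h⟧²(x_i) − ε τ_qu Σ_{i=1}^N ⟦u_h⟧⟦q_h⟧(x_i) = Σ_{i=1}^N ( ⟦V(u_h)⟧ − {Π f(u_h)} ⟦u_h⟧ )(x_i). Then the discrete energy t ↦ Σ_{i=1}^N ∫_{I_i} u_h(x,t)² dx is constant on [0,T]. -/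

import Mathlib

open Polynomial Set

noncomputable section

namespace DG

/-- A broken polynomial function in `W_h^k` (before imposing the degree bound):
the polynomial indexed by `i` is the restriction of the function to
element `I_i = (x (i-1), x i)`, for `i = 1,…,N`. -/
abbrev Broken := ℕ → Polynomial ℝ

/-- Membership in `W_h^k`: every elementwise polynomial has degree at most `k`. -/
def DegLE (k : ℕ) (P : Broken) : Prop := ∀ i, (P i).natDegree ≤ k

/-- `(F, G) = Σ_{i=1}^N ∫_{I_i} F_i G_i dx` for families of functions on the elements. -/
def ip (x : ℕ → ℝ) (N : ℕ) (F G : ℕ → ℝ → ℝ) : ℝ :=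
  ∑ i ∈ Finset.Icc 1 N, ∫ y in (x (i-1))..(x i), F i y * G i y

/-- the family of real functions determined by a broken polynomial -/
def ev (P : Broken) : ℕ → ℝ → ℝ := fun i y => (P i).eval y

/-- elementwise spatial derivative -/
def dx (P : Broken) : Broken := fun i => (P i).derivative

/-- `⟨φ̂, v n⟩ = Σ_{i=1}^N [φ̂(x_i) v(x_i⁻) - φ̂(x_{i-1}) v(x_{i-1}⁺)]` where `φ̂` is a
numerical trace, i.e. a function on the node indices. -/
def bt (x : ℕ → ℝ) (N : ℕ) (φ : ℕ → ℝ) (v : Broken) : ℝ :=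
  ∑ i ∈ Finset.Icc 1 N, (φ i * (v i).eval (x i) - φ (i - 1) * (v i).eval (x (i - 1)))

/-- the one-sided limit `ζ(x_i⁻)` of a broken polynomial at the node `x_i`, `i = 1,…,N` -/
def lv (x : ℕ → ℝ) (P : Broken) (i : ℕ) : ℝ := (P i).eval (x i)

/-- the one-sided limit `ζ(x_i⁺)` at the node `x_i`, with the periodic identification
`ζ(x_N⁺) = ζ(x_0⁺)` -/
def rv (x : ℕ → ℝ) (N : ℕ) (P : Broken) (i : ℕ) : ℝ :=
  if i = N then (P 1).eval (x 0) else (P (i + 1)).eval (x i)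

/-- the jump `⟦ζ⟧(x_i) = ζ(x_i⁻) - ζ(x_i⁺)` -/
def jmp (x : ℕ → ℝ) (N : ℕ) (P : Broken) (i : ℕ) : ℝ := lv x P i - rv x N P i

/-- the average `{ζ}(x_i) = (ζ(x_i⁻) + ζ(x_i⁺))/2` -/
def avg (x : ℕ → ℝ) (N : ℕ) (P : Broken) (i : ℕ) : ℝ := (lv x P i + rv x N P i) / 2

/-- the jump `⟦g(ζ)⟧(x_i)` of a composition `g ∘ ζ` -/
def jmpC (x : ℕ → ℝ) (N : ℕ) (g : ℝ → ℝ) (P : Broken) (i : ℕ) : ℝ :=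
  g (lv x P i) - g (rv x N P i)

/-- `η(w,v) = Σ_{i=1}^N ⟦w⟧⟦v⟧(x_i)` -/
def eta (x : ℕ → ℝ) (N : ℕ) (w v : Broken) : ℝ :=
  ∑ i ∈ Finset.Icc 1 N, jmp x N w i * jmp x N v i

/-- the mesh `a = x 0 < x 1 < ⋯ < x N = b` -/
structure Mesh (a b : ℝ) (N : ℕ) (x : ℕ → ℝ) : Prop where
  hab : a < b
  hN : 1 ≤ N
  left : x 0 = a
  right : x N = b
  mono : ∀ i, i < N → x i < x (i + 1)

/-- `Pf` is the elementwise L²-projection of the function `y ↦ f(ζ(y))` onto `W_h^k`: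
it has degree at most `k` and `∫_{I_i} (Pf - f(ζ)) w = 0` for every polynomial `w` of
degree at most `k` and every element `i`. -/
def IsProj (x : ℕ → ℝ) (N k : ℕ) (f : ℝ → ℝ) (P Pf : Broken) : Prop :=
  DegLE k Pf ∧ ∀ i ∈ Finset.Icc 1 N, ∀ w : Polynomial ℝ, w.natDegree ≤ k →
    (∫ y in (x (i-1))..(x i), ((Pf i).eval y - f ((P i).eval y)) * w.eval y) = 0

/-- a numerical trace takes equal values at the nodes `x_0` and `x_N` -/
def IsTrace (N : ℕ) (φ : ℕ → ℝ) : Prop := φ 0 = φ N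

/-- The semidiscrete DG scheme with zero source on `[0,T]`: `u q p : ℝ → Broken`
are the approximations (depending differentiably on `t`, with time derivatives
`ut qt pt`), and `uh qh ph` are the (possibly `t`-dependent) numerical traces. -/
structure Scheme (x : ℕ → ℝ) (N k : ℕ) (T ε : ℝ) (f : ℝ → ℝ)
    (u q p ut qt pt : ℝ → Broken) (uh qh ph : ℝ → ℕ → ℝ) : Prop where
  degu : ∀ t ∈ Icc (0:ℝ) T, DegLE k (u t)
  degq : ∀ t ∈ Icc (0:ℝ) T, DegLE k (q t)
  degp : ∀ t ∈ Icc (0:ℝ) T, DegLE k (p t)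
  degut : ∀ t ∈ Icc (0:ℝ) T, DegLE k (ut t)
  trace_u : ∀ t ∈ Icc (0:ℝ) T, IsTrace N (uh t)
  trace_q : ∀ t ∈ Icc (0:ℝ) T, IsTrace N (qh t)
  trace_p : ∀ t ∈ Icc (0:ℝ) T, IsTrace N (ph t)
  du : ∀ t ∈ Icc (0:ℝ) T, ∀ i, ∀ y : ℝ,
    HasDerivWithinAt (fun s => ((u s) i).eval y) (((ut t) i).eval y) (Icc (0:ℝ) T) t
  dq : ∀ t ∈ Icc (0:ℝ) T, ∀ i, ∀ y : ℝ,
    HasDerivWithinAt (fun s => ((q s) i).eval y) (((qt t) i).eval y) (Icc (0:ℝ) T) t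
  dp : ∀ t ∈ Icc (0:ℝ) T, ∀ i, ∀ y : ℝ,
    HasDerivWithinAt (fun s => ((p s) i).eval y) (((pt t) i).eval y) (Icc (0:ℝ) T) t
  eq1 : ∀ t ∈ Icc (0:ℝ) T, ∀ v : Broken, DegLE k v →
    ip x N (ev (q t)) (ev v) + ip x N (ev (u t)) (ev (dx v)) - bt x N (uh t) v = 0
  eq2 : ∀ t ∈ Icc (0:ℝ) T, ∀ z : Broken, DegLE k z →
    ip x N (ev (p t)) (ev z) + ε * ip x N (ev (q t)) (ev (dx z)) - ε * bt x N (qh t) z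
      = ip x N (fun i y => f (((u t) i).eval y)) (ev z)
  eq3 : ∀ t ∈ Icc (0:ℝ) T, ∀ w : Broken, DegLE k w →
    ip x N (ev (ut t)) (ev w) - ip x N (ev (p t)) (ev (dx w)) + bt x N (ph t) w = 0

end DG

namespace DGAux
open DG

lemma cyc (N : ℕ) (c : ℕ → ℝ) :
    ∑ i ∈ Finset.Icc 1 N, c (i-1) = ∑ i ∈ Finset.Icc 1 N, (if i = N then c 0 else c i) := by
  refine Finset.sum_nbij' (i := fun i => if i = 1 then N else i - 1)
    (j := fun j => if j = N then 1 else j + 1) ?_ ?_ ?_ ?_ ?_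
  all_goals intro a ha; simp only [Finset.mem_Icc] at *
  · split_ifs <;> omega
  · split_ifs <;> omega
  · split_ifs <;> omega
  · split_ifs <;> omega
  · rcases eq_or_ne a 1 with h1 | h1
    · simp [h1]
    · have : ¬ (a - 1 = N) := by omega
      simp only [h1, if_neg, this]
      split_ifs <;> simp_all

/-- rewrite the boundary pairing using jumps, for a periodic trace -/
lemma bt_eq (x : ℕ → ℝ) (N : ℕ) (φ : ℕ → ℝ) (hφ : φ 0 = φ N) (v : Broken) :
    bt x N φ v = ∑ i ∈ Finset.Icc 1 N, φ i * jmp x N v i := by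
  unfold bt
  rw [Finset.sum_sub_distrib]
  have h2 : ∑ i ∈ Finset.Icc 1 N, φ (i - 1) * (v i).eval (x (i - 1))
      = ∑ i ∈ Finset.Icc 1 N, φ i * rv x N v i := by
    have := cyc N (fun j => φ j * (v (j+1)).eval (x j))
    rw [Finset.sum_congr rfl (fun i hi => ?_)] at this
    · rw [this]
      refine Finset.sum_congr rfl (fun i hi => ?_)
      unfold rv
      split_ifs with h
      · subst h; rw [hφ]
      · rfl
    · simp only [Finset.mem_Icc] at hi
      have : i - 1 + 1 = i := by omega
      rw [this]
  rw [h2, ← Finset.sum_sub_distrib]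
  exact Finset.sum_congr rfl (fun i hi => by unfold jmp lv; ring)

lemma sumR (x : ℕ → ℝ) (N : ℕ) (v w : Broken) :
    ∑ i ∈ Finset.Icc 1 N, (v i).eval (x (i-1)) * (w i).eval (x (i-1))
      = ∑ i ∈ Finset.Icc 1 N, rv x N v i * rv x N w i := by
  have := cyc N (fun j => (v (j+1)).eval (x j) * (w (j+1)).eval (x j))
  rw [Finset.sum_congr rfl (fun i hi => ?_)] at this
  · rw [this]
    refine Finset.sum_congr rfl (fun i hi => ?_)
    unfold rv
    split_ifs with h <;> rfl
  · simp only [Finset.mem_Icc] at hi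
    have : i - 1 + 1 = i := by omega
    rw [this]

end DGAux

namespace DGAux
open DG

lemma pint (P : Polynomial ℝ) (c d : ℝ) :
    ∫ y in c..d, P.derivative.eval y = P.eval d - P.eval c :=
  intervalIntegral.integral_eq_sub_of_hasDerivAt (fun y _ => P.hasDerivAt y)
    ((Polynomial.continuous _).intervalIntegrable _ _)

lemma ibp_elem (c d : ℝ) (P Q : Polynomial ℝ) :
    ((∫ y in c..d, P.derivative.eval y * Q.eval y)
      + ∫ y in c..d, P.eval y * Q.derivative.eval y)
    = P.eval d * Q.eval d - P.eval c * Q.eval c := by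
  rw [← intervalIntegral.integral_add (f := fun y => P.derivative.eval y * Q.eval y)
    (g := fun y => P.eval y * Q.derivative.eval y)
    (((Polynomial.continuous _).mul (Polynomial.continuous _)).intervalIntegrable _ _)
    (((Polynomial.continuous _).mul (Polynomial.continuous _)).intervalIntegrable _ _)]
  have h : EqOn (fun y => P.derivative.eval y * Q.eval y + P.eval y * Q.derivative.eval y)
      (fun y => ((P*Q).derivative).eval y) (uIcc c d) := by
    intro y _; simp [Polynomial.derivative_mul]; try ring
  rw [intervalIntegral.integral_congr h, pint (P*Q)]
  simp

lemma ip_comm (x : ℕ → ℝ) (N : ℕ) (F G : ℕ → ℝ → ℝ) : ip x N F G = ip x N G F := by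
  unfold ip
  exact Finset.sum_congr rfl fun i _ =>
    intervalIntegral.integral_congr fun y _ => mul_comm _ _

lemma ip_ibp (x : ℕ → ℝ) (N : ℕ) (v w : Broken) :
    ip x N (ev (dx v)) (ev w) + ip x N (ev v) (ev (dx w))
      = ∑ i ∈ Finset.Icc 1 N, (avg x N v i * jmp x N w i + jmp x N v i * avg x N w i) := by
  unfold ip ev dx
  rw [← Finset.sum_add_distrib,
    Finset.sum_congr rfl (fun i _ => ibp_elem (x (i-1)) (x i) (v i) (w i)),
    Finset.sum_sub_distrib, sumR x N v w, ← Finset.sum_sub_distrib]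
  refine Finset.sum_congr rfl fun i _ => ?_
  unfold avg jmp lv; ring

lemma proj_ip (x : ℕ → ℝ) (N k : ℕ) (f : ℝ → ℝ) (hf : Continuous f) (U F : Broken)
    (hproj : IsProj x N k f U F) (w : Broken) (hw : DegLE k w) :
    ip x N (fun i y => f ((U i).eval y)) (ev w) = ip x N (ev F) (ev w) := by
  unfold ip ev
  refine Finset.sum_congr rfl fun i hi => ?_
  have h0 := hproj.2 i hi (w i) (hw i)
  have hi1 : IntervalIntegrable (fun y => (F i).eval y * (w i).eval y)
      MeasureTheory.volume (x (i-1)) (x i) :=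
    ((Polynomial.continuous _).mul (Polynomial.continuous _)).intervalIntegrable _ _
  have hi2 : IntervalIntegrable (fun y => f ((U i).eval y) * (w i).eval y)
      MeasureTheory.volume (x (i-1)) (x i) :=
    ((hf.comp (Polynomial.continuous _)).mul (Polynomial.continuous _)).intervalIntegrable _ _
  have heq : EqOn (fun y => ((F i).eval y - f ((U i).eval y)) * (w i).eval y)
      (fun y => (F i).eval y * (w i).eval y - f ((U i).eval y) * (w i).eval y)
      (uIcc (x (i-1)) (x i)) := fun y _ => by ring
  rw [intervalIntegral.integral_congr heq, intervalIntegral.integral_sub hi1 hi2] at h0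
  linarith

lemma fV_elem (f V : ℝ → ℝ) (hf : Continuous f) (hV : ∀ y, HasDerivAt V (f y) y)
    (P : Polynomial ℝ) (c d : ℝ) :
    ∫ y in c..d, f (P.eval y) * P.derivative.eval y = V (P.eval d) - V (P.eval c) :=
  intervalIntegral.integral_eq_sub_of_hasDerivAt
    (fun y _ => (hV (P.eval y)).comp y (P.hasDerivAt y))
    (((hf.comp (Polynomial.continuous _)).mul (Polynomial.continuous _)).intervalIntegrable _ _)

end DGAux

namespace DGAux
open DG

lemma sumV (x : ℕ → ℝ) (N : ℕ) (V : ℝ → ℝ) (v : Broken) :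
    ∑ i ∈ Finset.Icc 1 N, V ((v i).eval (x (i-1)))
      = ∑ i ∈ Finset.Icc 1 N, V (rv x N v i) := by
  have := cyc N (fun j => V ((v (j+1)).eval (x j)))
  rw [Finset.sum_congr rfl (fun i hi => ?_)] at this
  · rw [this]
    refine Finset.sum_congr rfl (fun i hi => ?_)
    unfold rv
    split_ifs with h <;> rfl
  · simp only [Finset.mem_Icc] at hi
    have : i - 1 + 1 = i := by omega
    rw [this]

lemma poly_eval_expand (k : ℕ) (P : Polynomial ℝ) (hP : P.natDegree ≤ k) (y : ℝ) :
    P.eval y = ∑ m ∈ Finset.range (k+1),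
      P.eval (m : ℝ) * (Lagrange.basis (Finset.range (k+1)) (fun j => (j:ℝ)) m).eval y := by
  have hinj : Set.InjOn (fun j : ℕ => (j:ℝ)) (Finset.range (k+1)) :=
    fun a _ b _ h => Nat.cast_injective h
  have hdeg : P.degree < (Finset.range (k+1)).card := by
    rw [Finset.card_range]
    exact lt_of_le_of_lt Polynomial.degree_le_natDegree
      (by exact_mod_cast Nat.lt_succ_of_le hP)
  conv_lhs => rw [Lagrange.eq_interpolate hinj hdeg]
  rw [Lagrange.interpolate_apply, Polynomial.eval_finset_sum]
  exact Finset.sum_congr rfl fun m _ => by simp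

lemma bilin (k : ℕ) (c d : ℝ) (P Q : Polynomial ℝ) (hP : P.natDegree ≤ k)
    (hQ : Q.natDegree ≤ k) :
    (∫ y in c..d, P.eval y * Q.eval y)
      = ∑ m ∈ Finset.range (k+1), ∑ n ∈ Finset.range (k+1),
          P.eval (m:ℝ) * Q.eval (n:ℝ) *
            ∫ y in c..d, (Lagrange.basis (Finset.range (k+1)) (fun j => (j:ℝ)) m).eval y
              * (Lagrange.basis (Finset.range (k+1)) (fun j => (j:ℝ)) n).eval y := by
  set L := fun m => Lagrange.basis (Finset.range (k+1)) (fun j => (j:ℝ)) m with hL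
  have h : EqOn (fun y => P.eval y * Q.eval y)
      (fun y => ∑ m ∈ Finset.range (k+1), ∑ n ∈ Finset.range (k+1),
        P.eval (m:ℝ) * Q.eval (n:ℝ) * ((L m).eval y * (L n).eval y)) (uIcc c d) := by
    intro y _
    simp only
    rw [poly_eval_expand k P hP y, poly_eval_expand k Q hQ y, Finset.sum_mul_sum]
    exact Finset.sum_congr rfl fun m _ => Finset.sum_congr rfl fun n _ => by ring
  have hint1 : ∀ m ∈ Finset.range (k+1), IntervalIntegrable
      (fun y => ∑ n ∈ Finset.range (k+1),
        P.eval (m:ℝ) * Q.eval (n:ℝ) * ((L m).eval y * (L n).eval y))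
      MeasureTheory.volume c d := fun m _ =>
    (continuous_finset_sum _ fun n _ => continuous_const.mul
      ((Polynomial.continuous _).mul (Polynomial.continuous _))).intervalIntegrable _ _
  have hint2 : ∀ (m : ℕ), ∀ n ∈ Finset.range (k+1), IntervalIntegrable
      (fun y => P.eval (m:ℝ) * Q.eval (n:ℝ) * ((L m).eval y * (L n).eval y))
      MeasureTheory.volume c d := fun m n _ =>
    (continuous_const.mul
      ((Polynomial.continuous _).mul (Polynomial.continuous _))).intervalIntegrable _ _
  rw [intervalIntegral.integral_congr h, intervalIntegral.integral_finset_sum hint1]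
  refine Finset.sum_congr rfl fun m _ => ?_
  rw [intervalIntegral.integral_finset_sum (hint2 m)]
  exact Finset.sum_congr rfl fun n _ => intervalIntegral.integral_const_mul _ _

lemma energy_hasDeriv (x : ℕ → ℝ) (N k : ℕ) (T : ℝ) (u ut : ℝ → Broken)
    (degu : ∀ s ∈ Icc (0:ℝ) T, DegLE k (u s))
    (degut : ∀ s ∈ Icc (0:ℝ) T, DegLE k (ut s))
    (du : ∀ s ∈ Icc (0:ℝ) T, ∀ i, ∀ y : ℝ,
      HasDerivWithinAt (fun r => ((u r) i).eval y) (((ut s) i).eval y) (Icc (0:ℝ) T) s)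
    (t : ℝ) (ht : t ∈ Icc (0:ℝ) T) :
    HasDerivWithinAt
      (fun s => ∑ i ∈ Finset.Icc 1 N, ∫ y in (x (i-1))..(x i), ((u s) i).eval y ^ 2)
      (2 * ip x N (ev (ut t)) (ev (u t))) (Icc (0:ℝ) T) t := by
  have heq : 2 * ip x N (ev (ut t)) (ev (u t))
      = ∑ i ∈ Finset.Icc 1 N,
          2 * ∫ y in (x (i-1))..(x i), ((ut t) i).eval y * ((u t) i).eval y := by
    unfold ip ev; rw [Finset.mul_sum]
  rw [heq]
  refine HasDerivWithinAt.fun_sum (fun i _ => ?_)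
  set c := x (i-1); set d := x i
  set L := fun m => Lagrange.basis (Finset.range (k+1)) (fun j => (j:ℝ)) m with hLdef
  set A := fun m n => ∫ y in c..d, (L m).eval y * (L n).eval y with hAdef
  have h1 : HasDerivWithinAt
      (fun s => ∑ m ∈ Finset.range (k+1), ∑ n ∈ Finset.range (k+1),
        ((u s) i).eval (m:ℝ) * ((u s) i).eval (n:ℝ) * A m n)
      (∑ m ∈ Finset.range (k+1), ∑ n ∈ Finset.range (k+1),
        (((ut t) i).eval (m:ℝ) * ((u t) i).eval (n:ℝ)
          + ((u t) i).eval (m:ℝ) * ((ut t) i).eval (n:ℝ)) * A m n)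
      (Icc (0:ℝ) T) t := by
    refine HasDerivWithinAt.fun_sum (fun m _ => HasDerivWithinAt.fun_sum (fun n _ => ?_))
    exact ((du t ht i (m:ℝ)).mul (du t ht i (n:ℝ))).mul_const _
  have h2 : ∀ s ∈ Icc (0:ℝ) T,
      (∫ y in c..d, ((u s) i).eval y ^ 2)
        = ∑ m ∈ Finset.range (k+1), ∑ n ∈ Finset.range (k+1),
            ((u s) i).eval (m:ℝ) * ((u s) i).eval (n:ℝ) * A m n := by
    intro s hs
    have hsq : EqOn (fun y => ((u s) i).eval y ^ 2)
        (fun y => ((u s) i).eval y * ((u s) i).eval y) (uIcc c d) := fun y _ => sq _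
    rw [intervalIntegral.integral_congr hsq, bilin k c d _ _ (degu s hs i) (degu s hs i)]
  have h3 : (2 * ∫ y in c..d, ((ut t) i).eval y * ((u t) i).eval y)
      = ∑ m ∈ Finset.range (k+1), ∑ n ∈ Finset.range (k+1),
        (((ut t) i).eval (m:ℝ) * ((u t) i).eval (n:ℝ)
          + ((u t) i).eval (m:ℝ) * ((ut t) i).eval (n:ℝ)) * A m n := by
    have e1 := bilin k c d ((ut t) i) ((u t) i) (degut t ht i) (degu t ht i)
    have e2 := bilin k c d ((u t) i) ((ut t) i) (degu t ht i) (degut t ht i)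
    have e3 : (∫ y in c..d, ((u t) i).eval y * ((ut t) i).eval y)
        = ∫ y in c..d, ((ut t) i).eval y * ((u t) i).eval y :=
      intervalIntegral.integral_congr fun y _ => mul_comm _ _
    calc (2 * ∫ y in c..d, ((ut t) i).eval y * ((u t) i).eval y)
        = (∫ y in c..d, ((ut t) i).eval y * ((u t) i).eval y)
          + ∫ y in c..d, ((u t) i).eval y * ((ut t) i).eval y := by rw [e3]; ring
      _ = ∑ m ∈ Finset.range (k+1), ∑ n ∈ Finset.range (k+1),
            (((ut t) i).eval (m:ℝ) * ((u t) i).eval (n:ℝ)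
              + ((u t) i).eval (m:ℝ) * ((ut t) i).eval (n:ℝ)) * A m n := by
          rw [e1, e2, ← Finset.sum_add_distrib]
          refine Finset.sum_congr rfl fun m _ => ?_
          rw [← Finset.sum_add_distrib]
          exact Finset.sum_congr rfl fun n _ => by ring
  rw [h3]
  exact h1.congr (fun s hs => h2 s hs) (h2 t ht)

end DGAux

open DG

/-- Theorem 2.1, energy part: with the traces (2.4) and the constraint (2.5a) on the
stabilization parameters, the discrete energy is conserved. -/
theorem dg_energy_part
    (a b : ℝ) (N k : ℕ) (x : ℕ → ℝ) (hmesh : DG.Mesh a b N x)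
    (T ε : ℝ) (hT : 0 < T) (f V : ℝ → ℝ) (hf : Continuous f)
    (hV : ∀ y : ℝ, HasDerivAt V (f y) y)
    (u q p ut qt pt : ℝ → DG.Broken) (uh qh ph : ℝ → ℕ → ℝ)
    (hS : DG.Scheme x N k T ε f u q p ut qt pt uh qh ph)
    (Pf : ℝ → DG.Broken)
    (hPf : ∀ t ∈ Set.Icc (0:ℝ) T, DG.IsProj x N k f (u t) (Pf t))
    (τqu τpu : ℝ → ℝ)
    (huh : ∀ t ∈ Set.Icc (0:ℝ) T, ∀ i ∈ Finset.Icc 1 N,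
      uh t i = DG.avg x N (u t) i)
    (hqh : ∀ t ∈ Set.Icc (0:ℝ) T, ∀ i ∈ Finset.Icc 1 N,
      qh t i = DG.avg x N (q t) i + τqu t * DG.jmp x N (u t) i)
    (hph : ∀ t ∈ Set.Icc (0:ℝ) T, ∀ i ∈ Finset.Icc 1 N,
      ph t i = DG.avg x N (p t) i + τpu t * DG.jmp x N (u t) i)
    (hconsA : ∀ t ∈ Set.Icc (0:ℝ) T,
      τpu t * (∑ i ∈ Finset.Icc 1 N, DG.jmp x N (u t) i ^ 2)
        - ε * τqu t * (∑ i ∈ Finset.Icc 1 N, DG.jmp x N (u t) i * DG.jmp x N (q t) i)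
        = ∑ i ∈ Finset.Icc 1 N,
            (DG.jmpC x N V (u t) i - DG.avg x N (Pf t) i * DG.jmp x N (u t) i)) :
    ∀ t₁ ∈ Set.Icc (0:ℝ) T, ∀ t₂ ∈ Set.Icc (0:ℝ) T,
      (∑ i ∈ Finset.Icc 1 N, ∫ y in (x (i-1))..(x i), ((u t₁) i).eval y ^ 2)
        = ∑ i ∈ Finset.Icc 1 N, ∫ y in (x (i-1))..(x i), ((u t₂) i).eval y ^ 2 := by
  intro t₁ ht₁ t₂ ht₂
  have key : ∀ t ∈ Set.Icc (0:ℝ) T, ip x N (ev (ut t)) (ev (u t)) = 0 := by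
    intro t ht
    have degU := hS.degu t ht
    have degQ := hS.degq t ht
    have degP := hS.degp t ht
    have degF := (hPf t ht).1
    have degdxU : DegLE k (dx (u t)) := fun i =>
      le_trans (Polynomial.natDegree_derivative_le _) (le_trans (Nat.sub_le _ _) (degU i))
    have hbtp : bt x N (ph t) (u t)
        = (∑ i ∈ Finset.Icc 1 N, avg x N (p t) i * jmp x N (u t) i)
          + τpu t * (∑ i ∈ Finset.Icc 1 N, jmp x N (u t) i ^ 2) := by
      rw [DGAux.bt_eq x N _ (hS.trace_p t ht) (u t),
        Finset.sum_congr rfl (fun i hi => by rw [hph t ht i hi]),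
        Finset.mul_sum, ← Finset.sum_add_distrib]
      exact Finset.sum_congr rfl fun i _ => by ring
    have hbtq : bt x N (qh t) (q t)
        = (∑ i ∈ Finset.Icc 1 N, avg x N (q t) i * jmp x N (q t) i)
          + τqu t * (∑ i ∈ Finset.Icc 1 N, jmp x N (u t) i * jmp x N (q t) i) := by
      rw [DGAux.bt_eq x N _ (hS.trace_q t ht) (q t),
        Finset.sum_congr rfl (fun i hi => by rw [hqh t ht i hi]),
        Finset.mul_sum, ← Finset.sum_add_distrib]
      exact Finset.sum_congr rfl fun i _ => by ring
    have hbtuP : bt x N (uh t) (p t)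
        = ∑ i ∈ Finset.Icc 1 N, avg x N (u t) i * jmp x N (p t) i := by
      rw [DGAux.bt_eq x N _ (hS.trace_u t ht) (p t)]
      exact Finset.sum_congr rfl fun i hi => by rw [huh t ht i hi]
    have hbtuF : bt x N (uh t) (Pf t)
        = ∑ i ∈ Finset.Icc 1 N, avg x N (u t) i * jmp x N (Pf t) i := by
      rw [DGAux.bt_eq x N _ (hS.trace_u t ht) (Pf t)]
      exact Finset.sum_congr rfl fun i hi => by rw [huh t ht i hi]
    have hIBPup : ip x N (ev (dx (u t))) (ev (p t)) + ip x N (ev (u t)) (ev (dx (p t)))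
        = (∑ i ∈ Finset.Icc 1 N, avg x N (u t) i * jmp x N (p t) i)
          + ∑ i ∈ Finset.Icc 1 N, avg x N (p t) i * jmp x N (u t) i := by
      rw [DGAux.ip_ibp x N (u t) (p t), Finset.sum_add_distrib]
      congr 1
      exact Finset.sum_congr rfl fun i _ => mul_comm _ _
    have hIBPuF : ip x N (ev (dx (u t))) (ev (Pf t)) + ip x N (ev (u t)) (ev (dx (Pf t)))
        = (∑ i ∈ Finset.Icc 1 N, avg x N (u t) i * jmp x N (Pf t) i)
          + ∑ i ∈ Finset.Icc 1 N, avg x N (Pf t) i * jmp x N (u t) i := by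
      rw [DGAux.ip_ibp x N (u t) (Pf t), Finset.sum_add_distrib]
      congr 1
      exact Finset.sum_congr rfl fun i _ => mul_comm _ _
    have hqq : ip x N (ev (q t)) (ev (dx (q t)))
        = ∑ i ∈ Finset.Icc 1 N, avg x N (q t) i * jmp x N (q t) i := by
      have h := DGAux.ip_ibp x N (q t) (q t)
      rw [DGAux.ip_comm x N (ev (dx (q t))) (ev (q t))] at h
      have h2 : ∑ i ∈ Finset.Icc 1 N,
          (avg x N (q t) i * jmp x N (q t) i + jmp x N (q t) i * avg x N (q t) i)
          = 2 * ∑ i ∈ Finset.Icc 1 N, avg x N (q t) i * jmp x N (q t) i := by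
        rw [Finset.mul_sum]
        exact Finset.sum_congr rfl fun i _ => by ring
      rw [h2] at h
      linarith
    have hVs : ip x N (ev (Pf t)) (ev (dx (u t)))
        = ∑ i ∈ Finset.Icc 1 N, jmpC x N V (u t) i := by
      rw [← DGAux.proj_ip x N k f hf (u t) (Pf t) (hPf t ht) (dx (u t)) degdxU]
      unfold ip ev dx
      rw [Finset.sum_congr rfl
        (fun i _ => DGAux.fV_elem f V hf hV ((u t) i) (x (i-1)) (x i)),
        Finset.sum_sub_distrib, DGAux.sumV x N V (u t), ← Finset.sum_sub_distrib]
      exact Finset.sum_congr rfl fun i _ => rfl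
    have hE3 := hS.eq3 t ht (u t) degU
    have hE1p := hS.eq1 t ht (p t) degP
    have hE1F := hS.eq1 t ht (Pf t) degF
    have hE2 := hS.eq2 t ht (q t) degQ
    have hfq : ip x N (fun i y => f (((u t) i).eval y)) (ev (q t))
        = ip x N (ev (Pf t)) (ev (q t)) :=
      DGAux.proj_ip x N k f hf (u t) (Pf t) (hPf t ht) (q t) degQ
    have c1 : ip x N (ev (q t)) (ev (p t)) = ip x N (ev (p t)) (ev (q t)) :=
      DGAux.ip_comm x N _ _
    have c2 : ip x N (ev (q t)) (ev (Pf t)) = ip x N (ev (Pf t)) (ev (q t)) :=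
      DGAux.ip_comm x N _ _
    have c3 : ip x N (ev (p t)) (ev (dx (u t))) = ip x N (ev (dx (u t))) (ev (p t)) :=
      DGAux.ip_comm x N _ _
    have c4 : ip x N (ev (dx (u t))) (ev (Pf t)) = ip x N (ev (Pf t)) (ev (dx (u t))) :=
      DGAux.ip_comm x N _ _
    have hcons := hconsA t ht
    rw [Finset.sum_sub_distrib] at hcons
    rw [hbtp] at hE3
    rw [hbtuP] at hE1p
    rw [hbtuF] at hE1F
    rw [hbtq, hqq, hfq] at hE2
    linarith
  have hderiv : ∀ t ∈ Set.Icc (0:ℝ) T, HasDerivWithinAt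
      (fun s => ∑ i ∈ Finset.Icc 1 N, ∫ y in (x (i-1))..(x i), ((u s) i).eval y ^ 2)
      0 (Set.Icc (0:ℝ) T) t := by
    intro t ht
    have h := DGAux.energy_hasDeriv x N k T u ut hS.degu hS.degut hS.du t ht
    rw [key t ht, mul_zero] at h
    exact h
  have hconst : ∀ s ∈ Set.Icc (0:ℝ) T,
      (∑ i ∈ Finset.Icc 1 N, ∫ y in (x (i-1))..(x i), ((u s) i).eval y ^ 2)
        = ∑ i ∈ Finset.Icc 1 N, ∫ y in (x (i-1))..(x i), ((u 0) i).eval y ^ 2 := by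
    refine constant_of_has_deriv_right_zero
      (fun s hs => (hderiv s hs).continuousWithinAt) ?_
    intro s hs
    exact (hderiv s (Set.Ico_subset_Icc_self hs)).mono_of_mem_nhdsWithin (Icc_mem_nhdsGE_of_mem hs)
  rw [hconst t₁ ht₁, hconst t₂ ht₂]
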